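/- arXiv:1106.0309 — 3 statements merged into one kernel-verified Lean document; each statement's English description precedes it below -/
import Mathlib

section
/- For every real number p with 1 ≤ p < ∞, there exists an infinite-dimensional closed ℝ-linear subspace Y of the Banach space L^p([0,1]) (with Lebesgue measure) such that for every g ∈ Y with g ≠ 0 and every real q with p < q < ∞, g does not belong to ℒ^q([0,1]), i.e. ¬ MemLp g q μ. In other words, L^p[0,1] \ ⋃_{q>p} L^q[0,1] is spaceable. -/
open MeasureTheory Set
open scoped ENNReal
set_option synthInstance.maxHeartbeats 1000000
set_option maxHeartbeats 1000000

noncomputable section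
namespace SpaceAux

def dd (k : ℕ) : ℝ := (2:ℝ)⁻¹ ^ ((k+1)^2)
def cc (p : ℝ) (k : ℕ) : ℝ := (2:ℝ) ^ (((k^2 + k : ℕ) : ℝ)/p)
def AA (n k : ℕ) : Set ℝ :=
  Set.Ioc ((2:ℝ)⁻¹^(n+1) * (1 + dd (k+1))) ((2:ℝ)⁻¹^(n+1) * (1 + dd k))
def ff (p : ℝ) (n : ℕ) : ℝ → ℝ := fun x => ∑' k, (AA n k).indicator (fun _ => cc p k) x

lemma dd_pos (k : ℕ) : 0 < dd k := by
  have : (0:ℝ) < 2⁻¹ := by norm_num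
  exact pow_pos this _

lemma dd_anti {j k : ℕ} (h : j ≤ k) : dd k ≤ dd j := by
  apply pow_le_pow_of_le_one (by norm_num) (by norm_num)
  exact Nat.pow_le_pow_left (by omega) 2

lemma dd_le_half (k : ℕ) : dd k ≤ 2⁻¹ := by
  have h := dd_anti (Nat.zero_le k)
  have : dd 0 = 2⁻¹ := by norm_num [dd]
  linarith

lemma dd_succ_le (k : ℕ) : dd (k+1) ≤ dd k / 2 := by
  have h : dd k / 2 = (2:ℝ)⁻¹ ^ ((k+1)^2 + 1) := by
    rw [pow_succ, dd]; ring
  rw [h]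
  apply pow_le_pow_of_le_one (by norm_num) (by norm_num)
  have : (k+1+1)^2 = (k+1)^2 + 2*(k+1)+1 := by ring
  omega

lemma AA_meas (n k : ℕ) : MeasurableSet (AA n k) := measurableSet_Ioc

lemma AA_subset_block (n k : ℕ) : AA n k ⊆ Set.Ioc ((2:ℝ)⁻¹^(n+1)) ((2:ℝ)⁻¹^n) := by
  apply Set.Ioc_subset_Ioc
  · nlinarith [dd_pos (k+1), pow_pos (by norm_num : (0:ℝ) < 2⁻¹) (n+1)]
  · have h1 : (1 + dd k) ≤ 2 := by nlinarith [dd_le_half k]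
    have h2 : (2:ℝ)⁻¹^(n+1) * 2 = (2:ℝ)⁻¹^n := by
      rw [pow_succ]; ring
    nlinarith [pow_pos (by norm_num : (0:ℝ) < 2⁻¹) (n+1)]

lemma AA_subset_Icc (n k : ℕ) : AA n k ⊆ Set.Icc (0:ℝ) 1 := by
  refine (AA_subset_block n k).trans ?_
  intro x hx
  constructor
  · exact le_of_lt (lt_of_le_of_lt (by positivity) hx.1)
  · exact hx.2.trans (pow_le_one₀ (by norm_num) (by norm_num))

lemma AA_disjoint_same (n : ℕ) {k j : ℕ} (h : k < j) :
    Disjoint (AA n k) (AA n j) := by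
  rw [AA, AA, Set.Ioc_disjoint_Ioc]
  refine le_trans (min_le_right _ _) (le_trans ?_ (le_max_left _ _))
  have : dd j ≤ dd (k+1) := dd_anti (by omega)
  have hp : (0:ℝ) < (2:ℝ)⁻¹^(n+1) := pow_pos (by norm_num) _
  nlinarith

lemma AA_disjoint : Pairwise fun (a b : ℕ × ℕ) => Disjoint (AA a.1 a.2) (AA b.1 b.2) := by
  intro ⟨n, k⟩ ⟨m, j⟩ hne
  simp only
  rcases eq_or_ne n m with rfl | hnm
  · have hkj : k ≠ j := by simpa using hne
    rcases hkj.lt_or_gt with h | h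
    · exact AA_disjoint_same n h
    · exact (AA_disjoint_same n h).symm
  · apply Set.disjoint_of_subset (AA_subset_block n k) (AA_subset_block m j)
    rw [Set.Ioc_disjoint_Ioc]
    rcases hnm.lt_or_gt with h | h
    · refine le_trans (min_le_right _ _) (le_trans ?_ (le_max_left _ _))
      exact pow_le_pow_of_le_one (by norm_num) (by norm_num) (by omega)
    · refine le_trans (min_le_left _ _) (le_trans ?_ (le_max_right _ _))
      exact pow_le_pow_of_le_one (by norm_num) (by norm_num) (by omega)

lemma not_mem_AA {n j k : ℕ} {x : ℝ} (hx : x ∈ AA n j) (h : k ≠ j) : x ∉ AA n k := by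
  intro hk
  rcases h.lt_or_gt with hlt | hlt
  · exact (AA_disjoint_same n hlt).ne_of_mem hk hx rfl
  · exact (AA_disjoint_same n hlt).ne_of_mem hx hk rfl

lemma vol_AA (n k : ℕ) :
    volume (AA n k) = ENNReal.ofReal ((2:ℝ)⁻¹^(n+1) * (dd k - dd (k+1))) := by
  rw [AA, Real.volume_Ioc]
  congr 1
  ring


lemma cc_pos (p : ℝ) (k : ℕ) : 0 < cc p k := Real.rpow_pos_of_pos (by norm_num) _

lemma ff_eq_of_mem {p : ℝ} {n j : ℕ} {x : ℝ} (hx : x ∈ AA n j) : ff p n x = cc p j := by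
  rw [ff]
  rw [tsum_eq_single j]
  · exact Set.indicator_of_mem hx _
  · intro k hk
    exact Set.indicator_of_notMem (not_mem_AA hx hk) _

lemma ff_eq_zero {p : ℝ} {n : ℕ} {x : ℝ} (hx : ∀ k, x ∉ AA n k) : ff p n x = 0 := by
  rw [ff]
  convert tsum_zero with k
  exact Set.indicator_of_notMem (hx k) _

lemma ff_measurable (p : ℝ) (n : ℕ) : Measurable (ff p n) := by
  apply measurable_of_tendsto_metrizable
    (f := fun N x => ∑ k ∈ Finset.range N, (AA n k).indicator (fun _ => cc p k) x)
  · intro N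
    apply Finset.measurable_sum
    intro k _
    exact (measurable_const).indicator (AA_meas n k)
  · rw [tendsto_pi_nhds]
    intro x
    by_cases h : ∃ j, x ∈ AA n j
    · obtain ⟨j, hj⟩ := h
      apply Filter.Tendsto.congr' (f₁ := fun _ => cc p j)
      · filter_upwards [Filter.eventually_ge_atTop (j+1)] with N hN
        have hs := Finset.sum_eq_single_of_mem
          (f := fun k => (AA n k).indicator (fun _ => cc p k) x) j
          (Finset.mem_range.2 (by omega : j < N))
          (fun k _ hk => Set.indicator_of_notMem (not_mem_AA hj hk) _)
        rw [hs]
        exact (Set.indicator_of_mem hj (fun _ => cc p j)).symm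
      · rw [ff_eq_of_mem hj]; exact tendsto_const_nhds
    · push_neg at h
      have hz : ∀ N, ∑ k ∈ Finset.range N, (AA n k).indicator (fun _ => cc p k) x = 0 := by
        intro N
        apply Finset.sum_eq_zero
        intro k _
        exact Set.indicator_of_notMem (h k) _
      simp only [hz, ff_eq_zero h]
      exact tendsto_const_nhds


local notation "μ0" => volume.restrict (Set.Icc (0:ℝ) 1)

lemma enorm_ff_rpow {p r : ℝ} (hr : 0 < r) (n : ℕ) (x : ℝ) :
    (‖ff p n x‖₊ : ℝ≥0∞) ^ r
      = ∑' k, (AA n k).indicator (fun _ => (ENNReal.ofReal (cc p k)) ^ r) x := by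
  by_cases h : ∃ j, x ∈ AA n j
  · obtain ⟨j, hj⟩ := h
    rw [tsum_eq_single j (fun k hk => Set.indicator_of_notMem (not_mem_AA hj hk) _),
      Set.indicator_of_mem hj, ff_eq_of_mem hj,
      ← enorm_eq_nnnorm, Real.enorm_eq_ofReal (cc_pos p j).le]
  · push_neg at h
    rw [ff_eq_zero h]
    have : ∀ k, (AA n k).indicator (fun _ => (ENNReal.ofReal (cc p k)) ^ r) x = 0 :=
      fun k => Set.indicator_of_notMem (h k) _
    simp [this, ENNReal.zero_rpow_of_pos hr, tsum_zero]

lemma lintegral_ff_rpow {p r : ℝ} (hr : 0 < r) (n : ℕ) :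
    ∫⁻ x, (‖ff p n x‖₊ : ℝ≥0∞) ^ r ∂μ0
      = ∑' k, ENNReal.ofReal (cc p k) ^ r * volume (AA n k) := by
  simp_rw [enorm_ff_rpow hr n]
  rw [lintegral_tsum (fun k => (measurable_const.indicator (AA_meas n k)).aemeasurable)]
  congr 1
  funext k
  rw [lintegral_indicator (AA_meas n k), setLIntegral_const,
    Measure.restrict_apply (AA_meas n k),
    Set.inter_eq_self_of_subset_left (AA_subset_Icc n k)]

lemma cc_rpow {p r : ℝ} (hp : p ≠ 0) (k : ℕ) :
    cc p k ^ r = (2:ℝ) ^ (((k^2 + k : ℕ) : ℝ) * (r/p)) := by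
  rw [cc, ← Real.rpow_mul (by norm_num : (0:ℝ) ≤ 2)]
  congr 1
  field_simp

lemma two_pow_mul_dd (k : ℕ) : (2:ℝ)^(k^2+k) * dd k = (2:ℝ)⁻¹^(k+1) := by
  have h2 : (2:ℝ)^((k+1)^2) = 2^(k^2+k) * 2^(k+1) := by
    rw [← pow_add]; congr 1; ring
  rw [dd, inv_pow, inv_pow, h2, mul_inv, ← mul_assoc,
    mul_inv_cancel₀ (by positivity), one_mul]

lemma lintegral_ff_self_lt_top {p : ℝ} (hp : 0 < p) (n : ℕ) :
    ∫⁻ x, (‖ff p n x‖₊ : ℝ≥0∞) ^ p ∂μ0 < ⊤ := by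
  rw [lintegral_ff_rpow hp n]
  have hbound : ∀ k : ℕ, ENNReal.ofReal (cc p k) ^ p * volume (AA n k)
      ≤ ENNReal.ofReal ((2:ℝ)⁻¹^(k+1)) := by
    intro k
    rw [vol_AA, ENNReal.ofReal_rpow_of_pos (cc_pos p k),
      ← ENNReal.ofReal_mul (Real.rpow_nonneg (cc_pos p k).le p)]
    apply ENNReal.ofReal_le_ofReal
    have e1 : cc p k ^ p = (2:ℝ)^(k^2+k) := by
      rw [cc_rpow hp.ne' k, div_self hp.ne', mul_one, Real.rpow_natCast]
    rw [e1, ← two_pow_mul_dd k]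
    have h2 : (2:ℝ)⁻¹^(n+1) * (dd k - dd (k+1)) ≤ dd k := by
      have h3 : (2:ℝ)⁻¹^(n+1) ≤ 1 := pow_le_one₀ (by norm_num) (by norm_num)
      nlinarith [dd_pos (k+1), dd_pos k, dd_anti (Nat.le_succ k),
        pow_pos (show (0:ℝ) < 2⁻¹ by norm_num) (n+1)]
    have h4 : (0:ℝ) < (2:ℝ)^(k^2+k) := by positivity
    nlinarith
  calc ∑' k, ENNReal.ofReal (cc p k) ^ p * volume (AA n k)
      ≤ ∑' k : ℕ, ENNReal.ofReal ((2:ℝ)⁻¹^(k+1)) := ENNReal.tsum_le_tsum hbound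
    _ ≤ ∑' k : ℕ, (2:ℝ≥0∞)⁻¹ ^ k := by
        apply ENNReal.tsum_le_tsum
        intro k
        rw [ENNReal.ofReal_pow (by norm_num)]
        calc ENNReal.ofReal 2⁻¹ ^ (k+1) ≤ (2:ℝ≥0∞)⁻¹ ^ (k+1) := by
              gcongr
              rw [ENNReal.ofReal_inv_of_pos (by norm_num), ENNReal.ofReal_ofNat]
          _ ≤ (2:ℝ≥0∞)⁻¹ ^ k := by
              apply pow_le_pow_of_le_one (by simp) ?_ (Nat.le_succ k)
              simp [ENNReal.inv_le_one]
    _ = (1 - 2⁻¹)⁻¹ := ENNReal.tsum_geometric _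
    _ < ⊤ := by
        rw [ENNReal.one_sub_inv_two]
        simp


lemma two_cancel (a : ℕ) : (2:ℝ)^a * (2:ℝ)⁻¹^a = 1 := by
  rw [← mul_pow]; norm_num

lemma exists_K (n : ℕ) {s : ℝ} (hs : 1 < s) :
    ∃ K : ℕ, ∀ k ≥ K, ((n + 1 + (k+1)^2 + 1 : ℕ) : ℝ) ≤ ((k^2 + k : ℕ) : ℝ) * s := by
  refine ⟨max (n+3) ⌈2/(s-1)⌉₊, fun k hk => ?_⟩
  have h1 : (n:ℝ) + 3 ≤ (k:ℝ) := by
    have := le_trans (le_max_left (n+3) ⌈2/(s-1)⌉₊) hk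
    exact_mod_cast Nat.cast_le.2 this
  have h2 : 2 ≤ (k:ℝ) * (s - 1) := by
    have hck : (⌈2/(s-1)⌉₊ : ℝ) ≤ (k:ℝ) :=
      Nat.cast_le.2 (le_trans (le_max_right (n+3) ⌈2/(s-1)⌉₊) hk)
    have hle : 2/(s-1) ≤ (k:ℝ) := le_trans (Nat.le_ceil _) hck
    have hs1 : 0 < s - 1 := by linarith
    calc (2:ℝ) = (2/(s-1)) * (s-1) := by field_simp
      _ ≤ (k:ℝ) * (s-1) := by exact mul_le_mul_of_nonneg_right hle hs1.le
  push_cast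
  nlinarith [sq_nonneg ((k:ℝ)), h1, h2, mul_le_mul_of_nonneg_left h1 (show (0:ℝ) ≤ (k:ℝ)*(s-1) - 2 by linarith)]

lemma lintegral_ff_q_top {p q : ℝ} (hp : 0 < p) (hq : p < q) (n : ℕ) :
    ∫⁻ x, (‖ff p n x‖₊ : ℝ≥0∞) ^ q ∂μ0 = ⊤ := by
  have hq0 : 0 < q := hp.trans hq
  have hs : 1 < q / p := (one_lt_div hp).2 hq
  rw [lintegral_ff_rpow hq0 n]
  obtain ⟨K, hK⟩ := exists_K n hs
  have hterm : ∀ k ≥ K, (1:ℝ≥0∞) ≤ ENNReal.ofReal (cc p k) ^ q * volume (AA n k) := by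
    intro k hk
    rw [vol_AA, ENNReal.ofReal_rpow_of_pos (cc_pos p k),
      ← ENNReal.ofReal_mul (Real.rpow_nonneg (cc_pos p k).le q)]
    rw [ENNReal.one_le_ofReal]
    have hdd : dd k / 2 ≤ dd k - dd (k+1) := by linarith [dd_succ_le k]
    have h2M : (2:ℝ)^(n+1+(k+1)^2+1) ≤ cc p k ^ q := by
      rw [cc_rpow hp.ne' k, ← Real.rpow_natCast 2 (n+1+(k+1)^2+1)]
      exact (Real.rpow_le_rpow_left_iff one_lt_two).2 (hK k hk)
    have hone : (1:ℝ) = (2:ℝ)^(n+1+(k+1)^2+1) * ((2:ℝ)⁻¹^(n+1) * (dd k / 2)) := by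
      rw [dd, pow_add, pow_add, pow_one]
      have c1 := two_cancel (n+1)
      have c2 := two_cancel ((k+1)^2)
      nlinarith [c1, c2]
    rw [hone]
    have hpos1 : (0:ℝ) < (2:ℝ)⁻¹^(n+1) := by positivity
    have hpos2 : (0:ℝ) < (2:ℝ)^(n+1+(k+1)^2+1) := by positivity
    have hq1 : (2:ℝ)^(n+1+(k+1)^2+1) * ((2:ℝ)⁻¹^(n+1) * (dd k / 2))
        ≤ cc p k ^ q * ((2:ℝ)⁻¹^(n+1) * (dd k / 2)) := by
      apply mul_le_mul_of_nonneg_right h2M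
      have := dd_pos k
      have h2i : (0:ℝ) < (2:ℝ)⁻¹^(n+1) := by positivity
      nlinarith
    refine hq1.trans ?_
    apply mul_le_mul_of_nonneg_left _ (Real.rpow_nonneg (cc_pos p k).le q)
    apply mul_le_mul_of_nonneg_left hdd hpos1.le
  rw [← top_le_iff]
  calc (⊤:ℝ≥0∞) = ∑' (_:ℕ), (1:ℝ≥0∞) := (ENNReal.tsum_const_eq_top_of_ne_zero one_ne_zero).symm
    _ ≤ ∑' k, ENNReal.ofReal (cc p (k+K)) ^ q * volume (AA n (k+K)) :=
        ENNReal.tsum_le_tsum (fun k => hterm (k+K) (by omega))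
    _ ≤ ∑' k, ENNReal.ofReal (cc p k) ^ q * volume (AA n k) :=
        ENNReal.tsum_comp_le_tsum_of_injective (add_left_injective K) _

lemma ofReal_ne_zero_of_pos {x : ℝ} (hx : 0 < x) : ENNReal.ofReal x ≠ 0 := by
  simp [ENNReal.ofReal_eq_zero, not_le, hx]

lemma memLp_ff {p : ℝ} (hp : 1 ≤ p) (n : ℕ) : MemLp (ff p n) (ENNReal.ofReal p) μ0 := by
  have hp0 : 0 < p := lt_of_lt_of_le one_pos hp
  constructor
  · exact (ff_measurable p n).aestronglyMeasurable
  · rw [eLpNorm_eq_lintegral_rpow_enorm_toReal (ofReal_ne_zero_of_pos hp0) ENNReal.ofReal_ne_top,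
      ENNReal.toReal_ofReal hp0.le]
    exact ENNReal.rpow_lt_top_of_nonneg (by positivity) (lintegral_ff_self_lt_top hp0 n).ne

lemma eLpNorm_ff_eq_top {p q : ℝ} (hp : 0 < p) (hq : p < q) (n : ℕ) :
    eLpNorm (ff p n) (ENNReal.ofReal q) μ0 = ⊤ := by
  have hq0 : 0 < q := hp.trans hq
  rw [eLpNorm_eq_lintegral_rpow_enorm_toReal (ofReal_ne_zero_of_pos hq0) ENNReal.ofReal_ne_top,
    ENNReal.toReal_ofReal hq0.le, (show ∫⁻ x, ‖ff p n x‖ₑ ^ q ∂μ0 = ⊤ from lintegral_ff_q_top hp hq n),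
    ENNReal.top_rpow_of_pos (by positivity)]

lemma not_memLp_ff {p q : ℝ} (hp : 0 < p) (hq : p < q) (n : ℕ) :
    ¬ MemLp (ff p n) (ENNReal.ofReal q) μ0 := by
  intro h
  exact absurd (eLpNorm_ff_eq_top hp hq n) h.eLpNorm_lt_top.ne

lemma ff_not_ae_zero {p : ℝ} (n : ℕ) : ¬ (ff p n =ᵐ[μ0] 0) := by
  intro h
  have hsub : AA n 0 ⊆ {x | ff p n x ≠ 0} := by
    intro x hx
    rw [Set.mem_setOf_eq, ff_eq_of_mem hx]
    exact (cc_pos p 0).ne'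
  have hnull : μ0 {x | ff p n x ≠ 0} = 0 := by
    have h2 := ae_iff.1 h
    simpa using h2
  have h0 : μ0 (AA n 0) = 0 := measure_mono_null hsub hnull
  rw [Measure.restrict_apply (AA_meas n 0),
    Set.inter_eq_self_of_subset_left (AA_subset_Icc n 0), vol_AA] at h0
  have hlt : dd 1 < dd 0 := lt_of_le_of_lt (dd_succ_le 0) (by linarith [dd_pos 0])
  have hpos : (0:ℝ) < (2:ℝ)⁻¹^(n+1) * (dd 0 - dd 1) := by
    have h2i : (0:ℝ) < (2:ℝ)⁻¹^(n+1) := by positivity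
    nlinarith [hlt]
  rw [ENNReal.ofReal_eq_zero] at h0
  norm_num at h0
  linarith


/-! ## Lp machinery -/

def UU (n : ℕ) : Set ℝ := ⋃ k, AA n k

lemma UU_meas (n : ℕ) : MeasurableSet (UU n) := MeasurableSet.iUnion (AA_meas n)

def WW : Set ℝ := (⋃ n, UU n)ᶜ

lemma WW_meas : MeasurableSet WW := (MeasurableSet.iUnion UU_meas).compl

lemma indicator_UU_ff_same (p : ℝ) (n : ℕ) : (UU n).indicator (ff p n) = ff p n := by
  apply Set.indicator_eq_self.2
  intro x hx
  rw [Function.mem_support] at hx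
  by_contra hxU
  rw [UU, Set.mem_iUnion] at hxU
  push_neg at hxU
  exact hx (ff_eq_zero hxU)

lemma ff_eq_zero_of_not_mem_UU {p : ℝ} {n : ℕ} {x : ℝ} (hx : x ∉ UU n) : ff p n x = 0 := by
  apply ff_eq_zero
  intro k hk
  exact hx (Set.mem_iUnion.2 ⟨k, hk⟩)

lemma indicator_UU_ff_other {p : ℝ} {n m : ℕ} (h : m ≠ n) :
    (UU n).indicator (ff p m) = 0 := by
  funext x
  by_cases hx : x ∈ UU n
  · rw [Set.indicator_of_mem hx]
    obtain ⟨k, hk⟩ := Set.mem_iUnion.1 hx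
    apply ff_eq_zero
    intro j hj
    exact (AA_disjoint (show ((m,j):ℕ×ℕ) ≠ (n,k) by simp [h])).ne_of_mem hj hk rfl
  · exact Set.indicator_of_notMem hx _

lemma indicator_WW_ff (p : ℝ) (m : ℕ) : WW.indicator (ff p m) = 0 := by
  funext x
  by_cases hx : x ∈ WW
  · rw [Set.indicator_of_mem hx]
    exact ff_eq_zero_of_not_mem_UU (fun hU => hx (Set.mem_iUnion.2 ⟨m, hU⟩))
  · exact Set.indicator_of_notMem hx _

section LpPart

variable {P : ℝ≥0∞} [Fact (1 ≤ P)]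

/-- multiplication by an indicator, as a continuous linear map on Lp. -/
def TT {s : Set ℝ} (hs : MeasurableSet s) : Lp ℝ P μ0 →L[ℝ] Lp ℝ P μ0 :=
  LinearMap.mkContinuous
    { toFun := fun g => ((Lp.memLp g).indicator hs).toLp (s.indicator ⇑g)
      map_add' := by
        intro g h
        classical
        apply Lp.ext
        filter_upwards [MemLp.coeFn_toLp (E := ℝ) ((Lp.memLp (g+h)).indicator hs),
          Lp.coeFn_add g h,
          Lp.coeFn_add (((Lp.memLp g).indicator hs).toLp (s.indicator ⇑g))
            (((Lp.memLp h).indicator hs).toLp (s.indicator ⇑h)),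
          MemLp.coeFn_toLp (E := ℝ) ((Lp.memLp g).indicator hs),
          MemLp.coeFn_toLp (E := ℝ) ((Lp.memLp h).indicator hs)] with x h1 h2 h3 h4 h5
        rw [h1, h3, Pi.add_apply, h4, h5, Set.indicator_apply, Set.indicator_apply,
          Set.indicator_apply]
        by_cases hxs : x ∈ s
        · simp only [if_pos hxs]
          rw [h2]; rfl
        · simp only [if_neg hxs, add_zero]
      map_smul' := by
        intro c g
        classical
        apply Lp.ext
        filter_upwards [MemLp.coeFn_toLp (E := ℝ) ((Lp.memLp (c • g)).indicator hs),
          Lp.coeFn_smul c g,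
          Lp.coeFn_smul c (((Lp.memLp g).indicator hs).toLp (s.indicator ⇑g)),
          MemLp.coeFn_toLp (E := ℝ) ((Lp.memLp g).indicator hs)] with x h1 h2 h3 h4
        rw [h1, RingHom.id_apply, h3, Pi.smul_apply, h4, Set.indicator_apply,
          Set.indicator_apply]
        by_cases hxs : x ∈ s
        · simp only [if_pos hxs]
          rw [h2]; rfl
        · simp only [if_neg hxs, smul_zero] }
    1
    (by
      intro g
      rw [one_mul]
      calc ‖((Lp.memLp g).indicator hs).toLp (s.indicator ⇑g)‖
          = (eLpNorm (s.indicator ⇑g) P μ0).toReal :=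
            Lp.norm_toLp (E := ℝ) (s.indicator ⇑g) ((Lp.memLp g).indicator hs)
        _ ≤ (eLpNorm (⇑g) P μ0).toReal :=
            ENNReal.toReal_mono (Lp.eLpNorm_ne_top g) (eLpNorm_indicator_le _)
        _ = ‖g‖ := (Lp.norm_def g).symm)

lemma TT_coeFn {s : Set ℝ} (hs : MeasurableSet s) (g : Lp ℝ P μ0) :
    ⇑(TT hs g) =ᵐ[μ0] s.indicator ⇑g := by
  have hrfl : TT (P:=P) hs g = ((Lp.memLp g).indicator hs).toLp (s.indicator ⇑g) := rfl
  rw [hrfl]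
  exact MemLp.coeFn_toLp (E := ℝ) ((Lp.memLp g).indicator hs)

lemma TT_eq_toLp_of_ae {s : Set ℝ} (hs : MeasurableSet s) (g : Lp ℝ P μ0)
    {f : ℝ → ℝ} (hf : MemLp f P μ0) (h : s.indicator ⇑g =ᵐ[μ0] f) :
    TT hs g = hf.toLp f := by
  apply Lp.ext
  filter_upwards [TT_coeFn hs g, hf.coeFn_toLp, h] with x h1 h2 h3
  rw [h1, h3, h2]

end LpPart


section Main

variable {p : ℝ}

def FF (hp : 1 ≤ p) (n : ℕ) : Lp ℝ (ENNReal.ofReal p) μ0 :=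
  (memLp_ff hp n).toLp (ff p n)

variable [Fact (1 ≤ ENNReal.ofReal p)]

lemma TT_UU_FF_same (hp : 1 ≤ p) (n : ℕ) :
    TT (UU_meas n) (FF hp n) = FF hp n := by
  apply TT_eq_toLp_of_ae _ _ (memLp_ff hp n)
  filter_upwards [(memLp_ff hp n).coeFn_toLp] with x hx
  by_cases hxU : x ∈ UU n
  · rw [Set.indicator_of_mem hxU]
    exact hx
  · rw [Set.indicator_of_notMem hxU, ff_eq_zero_of_not_mem_UU hxU]

lemma TT_UU_FF_other (hp : 1 ≤ p) {n m : ℕ} (h : m ≠ n) :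
    TT (UU_meas n) (FF hp m) = 0 := by
  apply Lp.ext
  filter_upwards [TT_coeFn (UU_meas n) (FF hp m), (memLp_ff hp m).coeFn_toLp,
    Lp.coeFn_zero ℝ (ENNReal.ofReal p) μ0] with x h1 h2 h3
  rw [h1, h3, Pi.zero_apply]
  by_cases hxU : x ∈ UU n
  · rw [Set.indicator_of_mem hxU]
    rw [show (⇑(FF hp m) : ℝ → ℝ) x = ⇑((memLp_ff hp m).toLp (ff p m)) x from rfl, h2]
    have := congrFun (indicator_UU_ff_other (p := p) h) x
    rwa [Set.indicator_of_mem hxU, Pi.zero_apply] at this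
  · exact Set.indicator_of_notMem hxU _

lemma TT_WW_FF (hp : 1 ≤ p) (m : ℕ) : TT WW_meas (FF hp m) = 0 := by
  apply Lp.ext
  filter_upwards [TT_coeFn WW_meas (FF hp m), (memLp_ff hp m).coeFn_toLp,
    Lp.coeFn_zero ℝ (ENNReal.ofReal p) μ0] with x h1 h2 h3
  rw [h1, h3, Pi.zero_apply]
  by_cases hxU : x ∈ WW
  · rw [Set.indicator_of_mem hxU]
    rw [show (⇑(FF hp m) : ℝ → ℝ) x = ⇑((memLp_ff hp m).toLp (ff p m)) x from rfl, h2]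
    have := congrFun (indicator_WW_ff p m) x
    rwa [Set.indicator_of_mem hxU, Pi.zero_apply] at this
  · exact Set.indicator_of_notMem hxU _

lemma FF_ne_zero (hp : 1 ≤ p) (n : ℕ) : FF hp n ≠ 0 := by
  intro h
  apply ff_not_ae_zero (p := p) (n := n)
  have h1 := Lp.eq_zero_iff_ae_eq_zero.1 h
  exact ((memLp_ff hp n).coeFn_toLp.symm.trans h1)

lemma FF_linearIndependent (hp : 1 ≤ p) : LinearIndependent ℝ (FF hp) := by
  rw [linearIndependent_iff']
  intro t gcoef hsum i hit
  have happ := congrArg (TT (UU_meas i)) hsum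
  rw [map_sum, map_zero] at happ
  have hsimp : ∀ j ∈ t, j ≠ i → TT (UU_meas i) (gcoef j • FF hp j) = 0 := by
    intro j _ hj
    rw [_root_.map_smul, TT_UU_FF_other hp hj, smul_zero]
  rw [Finset.sum_eq_single_of_mem i hit hsimp, _root_.map_smul, TT_UU_FF_same hp i] at happ
  exact (smul_eq_zero.1 happ).resolve_right (FF_ne_zero hp i)

lemma TT_UU_mem_span (hp : 1 ≤ p) {g : Lp ℝ (ENNReal.ofReal p) μ0}
    (hg : g ∈ (Submodule.span ℝ (Set.range (FF hp))).topologicalClosure) (n : ℕ) :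
    TT (UU_meas n) g ∈ Submodule.span ℝ {FF hp n} := by
  set V := Submodule.span ℝ {FF hp n} with hV
  have hVc : IsClosed (V : Set (Lp ℝ (ENNReal.ofReal p) μ0)) :=
    Submodule.closed_of_finiteDimensional V
  have hmaps : Set.MapsTo (TT (UU_meas n)) (Submodule.span ℝ (Set.range (FF hp)))
      (V : Set (Lp ℝ (ENNReal.ofReal p) μ0)) := by
    intro y hy
    induction hy using Submodule.span_induction with
    | mem y hy =>
        obtain ⟨m, rfl⟩ := hy
        rcases eq_or_ne m n with rfl | hmn
        · rw [TT_UU_FF_same hp m]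
          exact Submodule.subset_span rfl
        · rw [TT_UU_FF_other hp hmn]
          exact V.zero_mem
    | zero => rw [map_zero]; exact V.zero_mem
    | add y z _ _ hy hz => rw [map_add]; exact V.add_mem hy hz
    | smul c y _ hy => rw [_root_.map_smul]; exact V.smul_mem c hy
  have := hmaps.closure (TT (UU_meas n)).continuous hg
  rwa [hVc.closure_eq] at this

lemma TT_WW_eq_zero (hp : 1 ≤ p) {g : Lp ℝ (ENNReal.ofReal p) μ0}
    (hg : g ∈ (Submodule.span ℝ (Set.range (FF hp))).topologicalClosure) :
    TT WW_meas g = 0 := by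
  have hVc : IsClosed ((⊥ : Submodule ℝ (Lp ℝ (ENNReal.ofReal p) μ0)) :
      Set (Lp ℝ (ENNReal.ofReal p) μ0)) :=
    Submodule.closed_of_finiteDimensional ⊥
  have hmaps : Set.MapsTo (TT WW_meas) (Submodule.span ℝ (Set.range (FF hp)))
      ((⊥ : Submodule ℝ (Lp ℝ (ENNReal.ofReal p) μ0)) :
        Set (Lp ℝ (ENNReal.ofReal p) μ0)) := by
    intro y hy
    induction hy using Submodule.span_induction with
    | mem y hy =>
        obtain ⟨m, rfl⟩ := hy
        rw [SetLike.mem_coe, Submodule.mem_bot, TT_WW_FF hp m]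
    | zero => rw [SetLike.mem_coe, Submodule.mem_bot, map_zero]
    | add y z _ _ hy hz =>
        rw [SetLike.mem_coe, Submodule.mem_bot] at hy hz ⊢
        rw [map_add, hy, hz, add_zero]
    | smul c y _ hy =>
        rw [SetLike.mem_coe, Submodule.mem_bot] at hy ⊢
        rw [_root_.map_smul, hy, smul_zero]
  have hmem := hmaps.closure (TT WW_meas).continuous hg
  rw [hVc.closure_eq] at hmem
  simpa [Submodule.mem_bot] using hmem

lemma eq_zero_of_TT_zero {g : Lp ℝ (ENNReal.ofReal p) μ0}
    (hU : ∀ n, TT (UU_meas n) g = 0) (hW : TT WW_meas g = 0) : g = 0 := by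
  rw [Lp.eq_zero_iff_ae_eq_zero]
  have h1 : ∀ n : ℕ, (UU n).indicator ⇑g =ᵐ[μ0] 0 := by
    intro n
    have h := TT_coeFn (UU_meas n) g
    rw [hU n] at h
    exact h.symm.trans (Lp.coeFn_zero ℝ (ENNReal.ofReal p) μ0)
  have h2 : WW.indicator ⇑g =ᵐ[μ0] 0 := by
    have h := TT_coeFn WW_meas g
    rw [hW] at h
    exact h.symm.trans (Lp.coeFn_zero ℝ (ENNReal.ofReal p) μ0)
  filter_upwards [ae_all_iff.2 h1, h2] with x hx hwx
  rw [Pi.zero_apply]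
  by_cases hxU : x ∈ ⋃ n, UU n
  · obtain ⟨n, hn⟩ := Set.mem_iUnion.1 hxU
    have := hx n
    rwa [Set.indicator_of_mem hn, Pi.zero_apply] at this
  · have hxW : x ∈ WW := hxU
    rwa [Set.indicator_of_mem hxW, Pi.zero_apply] at hwx

end Main

end SpaceAux


open SpaceAux

/-- For every `1 ≤ p < ∞`, the set `L_p[0,1] \ ⋃_{q>p} L_q[0,1]` is spaceable:
there is an infinite-dimensional closed subspace of `L_p[0,1]` every nonzero element
of which fails to be in `ℒ^q[0,1]` for every `q > p`. -/
theorem spaceable_Lp_setminus_union_Lq (p : ℝ) (hp : 1 ≤ p) :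
    letI : Fact (1 ≤ ENNReal.ofReal p) := ⟨ENNReal.one_le_ofReal.mpr hp⟩
    ∃ Y : Submodule ℝ (Lp ℝ (ENNReal.ofReal p) (volume.restrict (Set.Icc (0:ℝ) 1))),
      IsClosed (Y : Set (Lp ℝ (ENNReal.ofReal p) (volume.restrict (Set.Icc (0:ℝ) 1)))) ∧
      ¬ Module.Finite ℝ Y ∧
      ∀ g ∈ Y, g ≠ 0 → ∀ q : ℝ, p < q →
        ¬ MemLp (g : ℝ → ℝ) (ENNReal.ofReal q) (volume.restrict (Set.Icc (0:ℝ) 1)) := by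
  haveI : Fact (1 ≤ ENNReal.ofReal p) := ⟨ENNReal.one_le_ofReal.mpr hp⟩
  refine ⟨(Submodule.span ℝ (Set.range (FF hp))).topologicalClosure,
    Submodule.isClosed_topologicalClosure _, ?_, ?_⟩
  · -- infinite dimensional
    intro hfin
    set Y := (Submodule.span ℝ (Set.range (FF hp))).topologicalClosure with hY
    have hmem : ∀ n, FF hp n ∈ Y := fun n =>
      (Submodule.le_topologicalClosure _) (Submodule.subset_span (Set.mem_range_self n))
    have li : LinearIndependent ℝ (fun n => (⟨FF hp n, hmem n⟩ : Y)) := by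
      apply LinearIndependent.of_comp Y.subtype
      have : (Y.subtype ∘ fun n => (⟨FF hp n, hmem n⟩ : Y)) = FF hp := rfl
      rw [this]
      exact FF_linearIndependent hp
    exact absurd li.aleph0_le_rank (not_le.2 (Module.rank_lt_aleph0 ℝ Y))
  · intro g hg hgne q hq hmemq
    have hTTne : ∃ n, TT (UU_meas n) g ≠ 0 := by
      by_contra hall
      push_neg at hall
      exact hgne (eq_zero_of_TT_zero hall (TT_WW_eq_zero hp hg))
    obtain ⟨n, hn⟩ := hTTne
    have hsp := TT_UU_mem_span hp hg n
    rw [Submodule.mem_span_singleton] at hsp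
    obtain ⟨c, hc⟩ := hsp
    have hcne : c ≠ 0 := by
      rintro rfl
      rw [zero_smul] at hc
      exact hn hc.symm
    have hae : (UU n).indicator ⇑g
        =ᵐ[volume.restrict (Set.Icc (0:ℝ) 1)] fun x => c • ff p n x := by
      have h1 := TT_coeFn (UU_meas n) g
      have h2 : ⇑(TT (UU_meas n) g) = ⇑(c • FF hp n) := by rw [← hc]
      have h3 := Lp.coeFn_smul c (FF hp n)
      have h4 := (memLp_ff hp n).coeFn_toLp
      filter_upwards [h1, h3, h4] with x e1 e3 e4
      rw [← e1, h2, e3, Pi.smul_apply]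
      rw [show (⇑(FF hp n) : ℝ → ℝ) x = ⇑((memLp_ff hp n).toLp (ff p n)) x from rfl, e4]
    have hind : MemLp ((UU n).indicator ⇑g) (ENNReal.ofReal q)
        (volume.restrict (Set.Icc (0:ℝ) 1)) := hmemq.indicator (UU_meas n)
    have hcf : MemLp (fun x => c • ff p n x) (ENNReal.ofReal q)
        (volume.restrict (Set.Icc (0:ℝ) 1)) := hind.ae_eq hae
    have hffq : MemLp (ff p n) (ENNReal.ofReal q)
        (volume.restrict (Set.Icc (0:ℝ) 1)) := by
      have h5 := hcf.const_smul c⁻¹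
      rw [show (c⁻¹ • fun x => c • ff p n x) = ff p n from
        funext fun x => by rw [Pi.smul_apply, smul_smul, inv_mul_cancel₀ hcne, one_smul]] at h5
      exact h5
    exact not_memLp_ff (lt_of_lt_of_le one_pos hp) hq n hffq
end
end

section
/- For every real number p with 0 < p < ∞, there exists a sequence (f_n)_{n∈ℕ} of functions on [0,1], each belonging to ℒ^p([0,1]), which is linearly independent (as elements of the space of a.e.-equivalence classes), and such that every nontrivial finite linear combination ∑ α_n f_n (coefficients α_n ∈ ℝ not all zero) belongs to ℒ^p([0,1]) but does not belong to ℒ^q([0,1]) for any real q > p. Consequently, L^p[0,1] \ ⋃_{q>p} L^q[0,1] is ℵ₀-lineable for every p > 0. -/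
open MeasureTheory Set Filter
open scoped ENNReal NNReal

namespace Aleph0LpAux

/-- endpoints parameter -/
noncomputable def bb (k : ℕ) : ℝ := (2:ℝ)⁻¹ ^ (k*k)
noncomputable def cc (n : ℕ) : ℝ := (2:ℝ)⁻¹ ^ (n+1)
noncomputable def JJ (n k : ℕ) : Set ℝ :=
  Set.Ico (cc n * (1 + bb (k+1))) (cc n * (1 + bb k))
noncomputable def ll (n k : ℕ) : ℝ := cc n * (bb k - bb (k+1))
noncomputable def hh (p : ℝ) (n k : ℕ) : ℝ := ((2:ℝ)⁻¹ ^ k / ll n k) ^ (p⁻¹ : ℝ)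
noncomputable def ff (p : ℝ) (n : ℕ) : ℝ → ℝ :=
  fun x => ∑' k, (JJ n k).indicator (fun _ => hh p n k) x

lemma bb_pos (k : ℕ) : 0 < bb k := pow_pos (by norm_num) _
lemma bb_le_one (k : ℕ) : bb k ≤ 1 := pow_le_one₀ (by norm_num) (by norm_num)
lemma bb_antitone {k j : ℕ} (h : k ≤ j) : bb j ≤ bb k :=
  pow_le_pow_of_le_one (by norm_num) (by norm_num) (Nat.mul_le_mul h h)
lemma bb_succ_lt (k : ℕ) : bb (k+1) < bb k := by
  apply pow_lt_pow_right_of_lt_one₀ (by norm_num) (by norm_num)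
  nlinarith
lemma cc_pos (n : ℕ) : 0 < cc n := pow_pos (by norm_num) _
lemma cc_le_one (n : ℕ) : cc n ≤ 1 := pow_le_one₀ (by norm_num) (by norm_num)
lemma two_cc (n : ℕ) : 2 * cc n = (2:ℝ)⁻¹ ^ n := by
  rw [cc, pow_succ]; ring
lemma two_cc_le_one (n : ℕ) : 2 * cc n ≤ 1 := by
  rw [two_cc]; exact pow_le_one₀ (by norm_num) (by norm_num)
lemma ll_pos (n k : ℕ) : 0 < ll n k :=
  mul_pos (cc_pos n) (sub_pos.2 (bb_succ_lt k))
lemma ll_le_bb (n k : ℕ) : ll n k ≤ bb k := by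
  have h1 := cc_pos n; have h2 := cc_le_one n
  have h3 := bb_pos (k+1); have h4 := bb_succ_lt k
  have h5 := bb_pos k
  rw [ll]; nlinarith

lemma JJ_subset (n k : ℕ) : JJ n k ⊆ Set.Ico (cc n) (2 * cc n) := by
  intro x hx
  obtain ⟨h1, h2⟩ := hx
  have hc := cc_pos n
  have hb1 := bb_pos (k+1)
  have hb2 := bb_le_one k
  constructor
  · nlinarith
  · nlinarith

lemma JJ_subset_Icc (n k : ℕ) : JJ n k ⊆ Set.Icc (0:ℝ) 1 := by
  intro x hx
  obtain ⟨h1, h2⟩ := JJ_subset n k hx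
  exact ⟨le_trans (cc_pos n).le h1, le_trans h2.le (two_cc_le_one n)⟩

lemma JJ_unique {n k m j : ℕ} {x : ℝ} (h1 : x ∈ JJ n k) (h2 : x ∈ JJ m j) :
    n = m ∧ k = j := by
  have key : ∀ a b : ℕ, a < b → ∀ y : ℝ, y ∈ Set.Ico (cc a) (2 * cc a) →
      y ∈ Set.Ico (cc b) (2 * cc b) → False := by
    intro a b hab y hy1 hy2
    have : 2 * cc b ≤ cc a := by
      rw [two_cc, cc]
      exact pow_le_pow_of_le_one (by norm_num) (by norm_num) hab
    have := hy2.2.trans_le this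
    exact absurd hy1.1 (not_le.2 this)
  have hnm : n = m := by
    rcases lt_trichotomy n m with h | h | h
    · exact absurd (key n m h x (JJ_subset n k h1) (JJ_subset m j h2)) (by simp)
    · exact h
    · exact absurd (key m n h x (JJ_subset m j h2) (JJ_subset n k h1)) (by simp)
  subst hnm
  refine ⟨rfl, ?_⟩
  by_contra hkj
  have keyk : ∀ a b : ℕ, a < b → x ∈ JJ n a → x ∈ JJ n b → False := by
    intro a b hab ha hb
    have hba : b ≥ a + 1 := hab
    have : bb b ≤ bb (a+1) := bb_antitone hba
    have hc := cc_pos n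
    have h3 := hb.2  -- x < cc n * (1 + bb b)
    have h4 := ha.1  -- cc n * (1 + bb (a+1)) ≤ x
    nlinarith
  rcases lt_trichotomy k j with h | h | h
  · exact absurd (keyk k j h h1 h2) (by simp)
  · exact hkj h
  · exact absurd (keyk j k h h2 h1) (by simp)

lemma ff_apply_mem {p : ℝ} {n k : ℕ} {x : ℝ} (hx : x ∈ JJ n k) :
    ff p n x = hh p n k := by
  rw [ff, tsum_eq_single k, Set.indicator_of_mem hx]
  intro j hj
  apply Set.indicator_of_notMem
  intro hxj
  exact hj (JJ_unique hxj hx).2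

lemma ff_apply_not_mem {p : ℝ} {n : ℕ} {x : ℝ} (hx : ∀ k, x ∉ JJ n k) :
    ff p n x = 0 := by
  rw [ff]
  calc (∑' k, (JJ n k).indicator (fun _ => hh p n k) x)
      = ∑' (k : ℕ), (0:ℝ) := tsum_congr (fun j => Set.indicator_of_notMem (hx j) _)
    _ = 0 := tsum_zero

lemma hasSum_ff (p : ℝ) (n : ℕ) (x : ℝ) :
    HasSum (fun k => (JJ n k).indicator (fun _ => hh p n k) x) (ff p n x) := by
  by_cases hx : ∃ k, x ∈ JJ n k
  · obtain ⟨k, hk⟩ := hx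
    have h := hasSum_single (f := fun j => (JJ n j).indicator (fun _ => hh p n j) x) k
      (fun j hj => Set.indicator_of_notMem (fun hxj => hj (JJ_unique hxj hk).2) _)
    simp only [Set.indicator_of_mem hk] at h
    rwa [← ff_apply_mem hk] at h
  · push_neg at hx
    have hz : (fun k => (JJ n k).indicator (fun _ => hh p n k) x) = fun _ => (0:ℝ) :=
      funext fun j => Set.indicator_of_notMem (hx j) _
    rw [ff_apply_not_mem hx, hz]
    exact hasSum_zero

lemma measurable_ff (p : ℝ) (n : ℕ) : Measurable (ff p n) := by
  apply measurable_of_tendsto_metrizable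
    (f := fun m => fun x => ∑ k ∈ Finset.range m, (JJ n k).indicator (fun _ => hh p n k) x)
  · intro m
    exact Finset.measurable_sum _ fun k _ => measurable_const.indicator measurableSet_Ico
  · rw [tendsto_pi_nhds]
    intro x
    exact (hasSum_ff p n x).tendsto_sum_nat

lemma hh_pos (p : ℝ) (n k : ℕ) : 0 < hh p n k :=
  Real.rpow_pos_of_pos (div_pos (pow_pos (by norm_num) _) (ll_pos n k)) _

lemma measurableSet_JJ (n k : ℕ) : MeasurableSet (JJ n k) := by
  rw [JJ]; exact measurableSet_Ico

lemma enorm_ff_rpow {p r : ℝ} (hr : 0 < r) (n : ℕ) (x : ℝ) :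
    ((‖ff p n x‖₊ : ℝ≥0∞)) ^ r
      = ∑' k, (JJ n k).indicator (fun _ => ((‖hh p n k‖₊ : ℝ≥0∞)) ^ r) x := by
  by_cases hx : ∃ k, x ∈ JJ n k
  · obtain ⟨k, hk⟩ := hx
    rw [ff_apply_mem hk, tsum_eq_single k
      (fun j hj => Set.indicator_of_notMem (fun hxj => hj (JJ_unique hxj hk).2) _),
      Set.indicator_of_mem hk]
  · push_neg at hx
    rw [ff_apply_not_mem hx]
    have h0 : ∀ j:ℕ, (JJ n j).indicator (fun _ => ((‖hh p n j‖₊ : ℝ≥0∞)) ^ r) x = 0 :=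
      fun j => Set.indicator_of_notMem (hx j) _
    rw [tsum_congr h0, tsum_zero]
    simp [ENNReal.zero_rpow_of_pos hr]

lemma volume_JJ (n k : ℕ) : volume (JJ n k) = ENNReal.ofReal (ll n k) := by
  rw [JJ, Real.volume_Ico]; congr 1; rw [ll]; ring

lemma lintegral_ff {p : ℝ} {r : ℝ} (hr : 0 < r) (n : ℕ) :
    ∫⁻ x, ((‖ff p n x‖₊ : ℝ≥0∞)) ^ r
      = ∑' k, ((‖hh p n k‖₊ : ℝ≥0∞)) ^ r * ENNReal.ofReal (ll n k) := by
  simp only [enorm_ff_rpow hr]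
  rw [lintegral_tsum (fun k => (measurable_const.indicator (measurableSet_JJ n k)).aemeasurable)]
  exact tsum_congr fun k => by
    rw [lintegral_indicator_const (measurableSet_JJ n k), volume_JJ]

lemma term_p {p : ℝ} (hp : 0 < p) (n k : ℕ) :
    ((‖hh p n k‖₊ : ℝ≥0∞)) ^ p * ENNReal.ofReal (ll n k)
      = ENNReal.ofReal ((2:ℝ)⁻¹ ^ k) := by
  rw [← enorm_eq_nnnorm, Real.enorm_eq_ofReal (hh_pos p n k).le,
      ENNReal.ofReal_rpow_of_pos (hh_pos p n k),
      ← ENNReal.ofReal_mul (Real.rpow_nonneg (hh_pos p n k).le _)]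
  congr 1
  rw [hh, Real.rpow_inv_rpow (div_nonneg (by positivity) (ll_pos n k).le) hp.ne', div_mul_cancel₀ _ (ll_pos n k).ne']

lemma memLp_ff {p : ℝ} (hp : 0 < p) (n : ℕ) :
    MemLp (ff p n) (ENNReal.ofReal p) (volume.restrict (Set.Icc (0:ℝ) 1)) := by
  have hne : ENNReal.ofReal p ≠ 0 := by simp [ENNReal.ofReal_eq_zero, not_le, hp]
  refine ⟨(measurable_ff p n).aestronglyMeasurable, ?_⟩
  rw [eLpNorm_eq_lintegral_rpow_enorm_toReal hne ENNReal.ofReal_ne_top,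
      ENNReal.toReal_ofReal hp.le]
  have hle : (∫⁻ x, ((‖ff p n x‖₊:ℝ≥0∞)) ^ p ∂(volume.restrict (Set.Icc (0:ℝ) 1)))
      ≤ ∫⁻ x, ((‖ff p n x‖₊:ℝ≥0∞)) ^ p := lintegral_mono' Measure.restrict_le_self le_rfl
  have hfin : (∫⁻ x, ((‖ff p n x‖₊:ℝ≥0∞)) ^ p) ≠ ⊤ := by
    rw [lintegral_ff hp n]
    have heq : ∀ k:ℕ, ((‖hh p n k‖₊ : ℝ≥0∞)) ^ p * ENNReal.ofReal (ll n k)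
        = (ENNReal.ofReal 2⁻¹)^k := fun k => by
      rw [term_p hp n k, ENNReal.ofReal_pow (by norm_num)]
    rw [tsum_congr heq, ENNReal.tsum_geometric, ENNReal.inv_ne_top]
    have hlt : ENNReal.ofReal 2⁻¹ < 1 := ENNReal.ofReal_lt_one.2 (by norm_num)
    intro h0
    rw [tsub_eq_zero_iff_le] at h0
    exact absurd h0 (not_le.2 hlt)
  exact ENNReal.rpow_lt_top_of_nonneg (by positivity) (ne_top_of_le_ne_top hfin hle)

lemma term_q_tendsto {p q : ℝ} (hp : 0 < p) (hq : p < q) (n : ℕ) :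
    Tendsto (fun k : ℕ => hh p n k ^ q * ll n k) atTop atTop := by
  set c := q / p with hcdef
  have hc1 : 1 < c := (one_lt_div hp).2 hq
  have hbd : ∀ k : ℕ, (2:ℝ) ^ ((k:ℝ) * ((k:ℝ)*(c-1) - c)) ≤ hh p n k ^ q * ll n k := by
    intro k
    have hl := ll_pos n k
    have ha : (0:ℝ) < (2:ℝ)⁻¹ ^ k := pow_pos (by norm_num) _
    have h1 : hh p n k ^ q = ((2:ℝ)⁻¹ ^ k / ll n k) ^ c := by
      rw [hh, ← Real.rpow_mul (div_nonneg ha.le hl.le), inv_mul_eq_div]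
    have h2 : hh p n k ^ q * ll n k
        = ((2:ℝ)⁻¹ ^ k) ^ c * ll n k ^ (1 - c) := by
      rw [h1, Real.div_rpow ha.le hl.le, Real.rpow_sub hl, Real.rpow_one]
      ring
    have h3 : ((2:ℝ)⁻¹ ^ k) ^ c * bb k ^ (1 - c)
        ≤ ((2:ℝ)⁻¹ ^ k) ^ c * ll n k ^ (1 - c) :=
      mul_le_mul_of_nonneg_left
        (Real.rpow_le_rpow_of_nonpos hl (ll_le_bb n k) (by linarith))
        (Real.rpow_nonneg ha.le _)
    have ha2 : (2:ℝ)⁻¹ ^ k = (2:ℝ) ^ (-(k:ℝ)) := by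
      rw [Real.rpow_neg (by norm_num), Real.rpow_natCast, inv_pow]
    have hb2 : bb k = (2:ℝ) ^ (-((k:ℝ)*(k:ℝ))) := by
      rw [bb, inv_pow, Real.rpow_neg (by norm_num), ← Real.rpow_natCast 2 (k*k)]
      push_cast
      ring_nf
    have h4 : ((2:ℝ)⁻¹ ^ k) ^ c * bb k ^ (1 - c)
        = (2:ℝ) ^ ((k:ℝ) * ((k:ℝ)*(c-1) - c)) := by
      rw [ha2, hb2, ← Real.rpow_mul (by norm_num), ← Real.rpow_mul (by norm_num),
        ← Real.rpow_add (by norm_num)]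
      congr 1
      ring
    rw [h2, ← h4] at *
    linarith [h3]
  have hE : Tendsto (fun k : ℕ => (k:ℝ) * ((k:ℝ)*(c-1) - c)) atTop atTop := by
    apply Tendsto.atTop_mul_atTop₀ tendsto_natCast_atTop_atTop
    have := tendsto_atTop_add_const_right atTop (-c)
      ((tendsto_natCast_atTop_atTop (R := ℝ)).atTop_mul_const (by linarith : (0:ℝ) < c - 1))
    simpa [sub_eq_add_neg] using this
  have h2x : Tendsto (fun x : ℝ => (2:ℝ) ^ x) atTop atTop := by
    simp_rw [Real.rpow_def_of_pos (by norm_num : (0:ℝ) < 2)]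
    exact Real.tendsto_exp_atTop.comp
      (Tendsto.const_mul_atTop (Real.log_pos one_lt_two) tendsto_id)
  exact tendsto_atTop_mono hbd (h2x.comp hE)

lemma F_eq {p : ℝ} {α : ℕ →₀ ℝ} {n₀ k : ℕ} (hn₀ : n₀ ∈ α.support) {x : ℝ}
    (hx : x ∈ JJ n₀ k) :
    ∑ n ∈ α.support, α n * ff p n x = α n₀ * hh p n₀ k := by
  rw [Finset.sum_eq_single n₀]
  · rw [ff_apply_mem hx]
  · intro m _ hmn
    rw [ff_apply_not_mem (fun j hj => hmn ((JJ_unique hj hx).1)), mul_zero]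
  · intro h; exact absurd hn₀ h

end Aleph0LpAux

open Aleph0LpAux Filter in
/-- For every `0 < p < ∞`, the set `L_p[0,1] \ ⋃_{q>p} L_q[0,1]` is `ℵ₀`-lineable:
there is a sequence of functions in `ℒ^p[0,1]`, linearly independent as a.e.-equivalence
classes, such that every nontrivial finite linear combination belongs to `ℒ^p[0,1]`
but to no `ℒ^q[0,1]` with `q > p`. -/
theorem aleph0_lineable_Lp_setminus_union_Lq (p : ℝ) (hp : 0 < p) :
    ∃ f : ℕ → ℝ → ℝ,
      (∀ n, MemLp (f n) (ENNReal.ofReal p) (volume.restrict (Set.Icc (0:ℝ) 1))) ∧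
      (∀ α : ℕ →₀ ℝ,
        (fun x => ∑ n ∈ α.support, α n * f n x)
          =ᵐ[volume.restrict (Set.Icc (0:ℝ) 1)] (fun _ => (0:ℝ)) → α = 0) ∧
      (∀ α : ℕ →₀ ℝ, α ≠ 0 →
        MemLp (fun x => ∑ n ∈ α.support, α n * f n x) (ENNReal.ofReal p)
          (volume.restrict (Set.Icc (0:ℝ) 1)) ∧
        ∀ q : ℝ, p < q →
          ¬ MemLp (fun x => ∑ n ∈ α.support, α n * f n x) (ENNReal.ofReal q)
            (volume.restrict (Set.Icc (0:ℝ) 1))) := by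
  refine ⟨ff p, fun n => memLp_ff hp n, ?_, ?_⟩
  · intro α hα
    by_contra hne
    obtain ⟨n₀, hn₀⟩ := Finsupp.support_nonempty_iff.2 hne
    have hαn : α n₀ ≠ 0 := Finsupp.mem_support_iff.1 hn₀
    have hnull : (volume.restrict (Set.Icc (0:ℝ) 1))
        {x | ¬ (∑ n ∈ α.support, α n * ff p n x) = 0} = 0 := by
      have := ae_iff.1 hα
      simpa using this
    have hsub : JJ n₀ 0 ⊆ {x | ¬ (∑ n ∈ α.support, α n * ff p n x) = 0} := by
      intro x hx
      simp only [Set.mem_setOf_eq, F_eq hn₀ hx]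
      exact mul_ne_zero hαn (hh_pos p n₀ 0).ne'
    have h0 : (volume.restrict (Set.Icc (0:ℝ) 1)) (JJ n₀ 0) = 0 :=
      measure_mono_null hsub hnull
    rw [Measure.restrict_apply' measurableSet_Icc,
      Set.inter_eq_self_of_subset_left (JJ_subset_Icc _ _), volume_JJ] at h0
    rw [ENNReal.ofReal_eq_zero] at h0
    exact absurd h0 (not_le.2 (ll_pos n₀ 0))
  · intro α hα
    obtain ⟨n₀, hn₀⟩ := Finsupp.support_nonempty_iff.2 hα
    have hαn : α n₀ ≠ 0 := Finsupp.mem_support_iff.1 hn₀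
    refine ⟨memLp_finset_sum α.support
      (fun n _ => (memLp_ff hp n).const_mul (α n)), ?_⟩
    intro q hq hmem
    have hq0 : 0 < q := hp.trans hq
    have hne : ENNReal.ofReal q ≠ 0 := by
      simp [ENNReal.ofReal_eq_zero, not_le, hq0]
    have hsn := hmem.2
    rw [eLpNorm_eq_lintegral_rpow_enorm_toReal hne ENNReal.ofReal_ne_top,
      ENNReal.toReal_ofReal hq0.le] at hsn
    simp only [enorm_eq_nnnorm] at hsn
    set μ := volume.restrict (Set.Icc (0:ℝ) 1) with hμ
    set I := ∫⁻ x, ((‖∑ n ∈ α.support, α n * ff p n x‖₊ : ℝ≥0∞)) ^ q ∂μ with hI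
    have hItop : I ≠ ⊤ := by
      intro h
      rw [h, ENNReal.top_rpow_of_pos (by positivity)] at hsn
      exact absurd hsn (by simp)
    have hrr : μ.restrict (JJ n₀ 0) = volume.restrict (JJ n₀ 0) := by
      rw [hμ, Measure.restrict_restrict (measurableSet_JJ n₀ 0),
        Set.inter_eq_self_of_subset_left (JJ_subset_Icc n₀ 0)]
    have hlow : ∀ k : ℕ, ENNReal.ofReal (|α n₀| ^ q * (hh p n₀ k ^ q * ll n₀ k)) ≤ I := by
      intro k
      have hrrk : μ.restrict (JJ n₀ k) = volume.restrict (JJ n₀ k) := by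
        rw [hμ, Measure.restrict_restrict (measurableSet_JJ n₀ k),
          Set.inter_eq_self_of_subset_left (JJ_subset_Icc n₀ k)]
      have hconst : ∀ x ∈ JJ n₀ k,
          ((‖∑ n ∈ α.support, α n * ff p n x‖₊ : ℝ≥0∞)) ^ q
            = ENNReal.ofReal (|α n₀| ^ q * hh p n₀ k ^ q) := by
        intro x hx
        rw [F_eq hn₀ hx, ← enorm_eq_nnnorm, Real.enorm_eq_ofReal_abs, abs_mul,
          abs_of_pos (hh_pos p n₀ k),
          ENNReal.ofReal_rpow_of_pos (mul_pos (abs_pos.2 hαn) (hh_pos p n₀ k)),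
          Real.mul_rpow (abs_nonneg _) (hh_pos p n₀ k).le]
      calc ENNReal.ofReal (|α n₀| ^ q * (hh p n₀ k ^ q * ll n₀ k))
          = ENNReal.ofReal (|α n₀| ^ q * hh p n₀ k ^ q) * ENNReal.ofReal (ll n₀ k) := by
            rw [← ENNReal.ofReal_mul (mul_nonneg (Real.rpow_nonneg (abs_nonneg _) _)
              (Real.rpow_nonneg (hh_pos p n₀ k).le _))]
            ring_nf
        _ = ∫⁻ x in JJ n₀ k,
              ((‖∑ n ∈ α.support, α n * ff p n x‖₊ : ℝ≥0∞)) ^ q ∂volume := by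
            rw [setLIntegral_congr_fun (measurableSet_JJ n₀ k) hconst,
              setLIntegral_const, volume_JJ]
        _ = ∫⁻ x in JJ n₀ k,
              ((‖∑ n ∈ α.support, α n * ff p n x‖₊ : ℝ≥0∞)) ^ q ∂μ := by
            rw [hrrk]
        _ ≤ I := setLIntegral_le_lintegral _ _
    have hdiv : Tendsto (fun k : ℕ => |α n₀| ^ q * (hh p n₀ k ^ q * ll n₀ k)) atTop atTop :=
      (term_q_tendsto hp hq n₀).const_mul_atTop (Real.rpow_pos_of_pos (abs_pos.2 hαn) q)
    obtain ⟨k, hk⟩ := (hdiv.eventually_gt_atTop I.toReal).exists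
    have hmono := ENNReal.toReal_mono hItop (hlow k)
    rw [ENNReal.toReal_ofReal (mul_nonneg (Real.rpow_nonneg (abs_nonneg _) _)
      (mul_nonneg (Real.rpow_nonneg (hh_pos p n₀ k).le _) (ll_pos n₀ k).le))] at hmono
    exact absurd hmono (not_le.2 hk)
end

section
/- Let 0 < p < ∞ and let f : ℝ → ℝ satisfy f ∈ ℒ^p([0,1]) and f ∉ ℒ^q([0,1]) for every real q > p. With I_n = [1 - 2^{1-n}, 1 - 2^{-n}) and f_n(x) = f(2^n (x - (1 - 2^{1-n}))) for x ∈ I_n, f_n(x) = 0 otherwise: (i) the family (f_n)_{n≥1} is linearly independent in the space of a.e.-equivalence classes of measurable functions on [0,1]; (ii) for every finitely supported family of reals (α_n) not all zero, the function ∑_n α_n f_n belongs to ℒ^p([0,1]) but does not belong to ℒ^q([0,1]) for any q > p. -/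
open MeasureTheory
open scoped ENNReal

section aux

lemma map_affine_vol (c d : ℝ) (hc : c ≠ 0) {s : Set ℝ} (hs : MeasurableSet s) :
    Measure.map (fun x => c * x + d) (volume.restrict ((fun x => c * x + d) ⁻¹' s))
      = ENNReal.ofReal |c⁻¹| • volume.restrict s := by
  have hT : Measurable fun x : ℝ => c * x + d := (measurable_const_mul c).add_const d
  rw [← Measure.restrict_map hT hs]
  have h1 : (fun x : ℝ => c * x + d) = (fun x : ℝ => x + d) ∘ (fun x : ℝ => c * x) := rfl
  rw [h1, ← Measure.map_map (measurable_add_const d) (measurable_const_mul c),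
    Real.map_volume_mul_left hc, Measure.map_smul]
  rw [show (fun x : ℝ => x + d) = (· + d) from rfl, Measure.IsAddRightInvariant.map_add_right_eq_self (μ := volume) d,
    Measure.restrict_smul]

lemma memℒp_comp_affine {f : ℝ → ℝ} (hf : Measurable f) (c d : ℝ) (hc : c ≠ 0)
    {s : Set ℝ} (hs : MeasurableSet s) (r : ENNReal) :
    MemLp (fun x => f (c * x + d)) r (volume.restrict ((fun x => c * x + d) ⁻¹' s)) ↔
      MemLp f r (volume.restrict s) := by
  have hT : Measurable fun x : ℝ => c * x + d := (measurable_const_mul c).add_const d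
  have hmap := map_affine_vol c d hc hs
  set k : ℝ≥0∞ := ENNReal.ofReal |c⁻¹| with hk
  have hk0 : k ≠ 0 := by
    simp [hk, ENNReal.ofReal_eq_zero, not_le, abs_pos, inv_ne_zero hc, hc]
  have hktop : k ≠ ⊤ := ENNReal.ofReal_ne_top
  have hiff : MemLp f r (Measure.map (fun x => c * x + d)
      (volume.restrict ((fun x => c * x + d) ⁻¹' s))) ↔
      MemLp (fun x => f (c * x + d)) r (volume.restrict ((fun x => c * x + d) ⁻¹' s)) := by
    exact memLp_map_measure_iff (hf.aestronglyMeasurable) hT.aemeasurable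
  rw [← hiff, hmap]
  constructor
  · intro h
    have := h.smul_measure (c := k⁻¹) (ENNReal.inv_ne_top.2 hk0)
    rwa [smul_smul, ENNReal.inv_mul_cancel hk0 hktop, one_smul] at this
  · intro h
    exact h.smul_measure hktop

lemma ae_zero_comp_affine {f : ℝ → ℝ} (hf : Measurable f) (c d : ℝ) (hc : c ≠ 0)
    {s : Set ℝ} (hs : MeasurableSet s)
    (h : (fun x => f (c * x + d)) =ᵐ[volume.restrict ((fun x => c * x + d) ⁻¹' s)]
      (fun _ => (0:ℝ))) :
    f =ᵐ[volume.restrict s] (fun _ => (0:ℝ)) := by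
  have hT : Measurable fun x : ℝ => c * x + d := (measurable_const_mul c).add_const d
  have hmap := map_affine_vol c d hc hs
  have hk0 : (ENNReal.ofReal |c⁻¹|) ≠ 0 := by
    simp [ENNReal.ofReal_eq_zero, not_le, abs_pos, inv_ne_zero hc, hc]
  have h2 : ∀ᵐ y ∂(Measure.map (fun x => c * x + d)
      (volume.restrict ((fun x => c * x + d) ⁻¹' s))), f y = 0 := by
    refine (MeasureTheory.ae_map_iff hT.aemeasurable
      (show MeasurableSet {x | f x = (0:ℝ)} from hf (measurableSet_singleton 0))).2 ?_
    filter_upwards [h] with x hx using hx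
  rw [hmap] at h2
  have h3 := ae_iff.1 h2
  rw [Measure.smul_apply, smul_eq_mul, mul_eq_zero] at h3
  replace h2 : ∀ᵐ y ∂volume.restrict s, f y = 0 := ae_iff.2 (h3.resolve_left hk0)
  filter_upwards [h2] with x hx using hx

end aux

/-- If `f ∈ ℒ^p[0,1]` but `f ∉ ℒ^q[0,1]` for all `q > p`, then the rescaled copies
`f_n` of `f` on the intervals `I_n = [1-2^{1-n}, 1-2^{-n})`, `n ≥ 1`, are linearly
independent as a.e.-equivalence classes, and every nontrivial finite linear combination
lies in `ℒ^p[0,1]` but in no `ℒ^q[0,1]` with `q > p`. -/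
theorem rescaled_family_linearIndependent_and_combos (p : ℝ) (hp : 0 < p)
    (f : ℝ → ℝ) (hf : Measurable f)
    (hfp : MemLp f (ENNReal.ofReal p) (volume.restrict (Set.Icc (0:ℝ) 1)))
    (hfq : ∀ q : ℝ, p < q →
      ¬ MemLp f (ENNReal.ofReal q) (volume.restrict (Set.Icc (0:ℝ) 1))) :
    let fn : ℕ → ℝ → ℝ := fun n x =>
      if x ∈ Set.Ico (1 - 2/2^(n+1) : ℝ) (1 - 1/2^(n+1))
        then f (2^(n+1) * (x - (1 - 2/2^(n+1)))) else 0
    (∀ α : ℕ →₀ ℝ,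
      (fun x => ∑ n ∈ α.support, α n * fn n x)
        =ᵐ[volume.restrict (Set.Icc (0:ℝ) 1)] (fun _ => (0:ℝ)) → α = 0) ∧
    (∀ α : ℕ →₀ ℝ, α ≠ 0 →
      MemLp (fun x => ∑ n ∈ α.support, α n * fn n x) (ENNReal.ofReal p)
        (volume.restrict (Set.Icc (0:ℝ) 1)) ∧
      ∀ q : ℝ, p < q →
        ¬ MemLp (fun x => ∑ n ∈ α.support, α n * fn n x) (ENNReal.ofReal q)
          (volume.restrict (Set.Icc (0:ℝ) 1))) := by
  intro fn
  have hfn : ∀ (n : ℕ) (x : ℝ), fn n x =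
      if x ∈ Set.Ico (1 - 2/2^(n+1) : ℝ) (1 - 1/2^(n+1))
        then f (2^(n+1) * (x - (1 - 2/2^(n+1)))) else 0 := fun n x => rfl
  have hc : ∀ n : ℕ, (0:ℝ) < 2^(n+1) := fun n => by positivity
  have hc2 : ∀ n : ℕ, (2:ℝ) ≤ 2^(n+1) := by
    intro n
    calc (2:ℝ) = 2^1 := (pow_one 2).symm
    _ ≤ 2^(n+1) := pow_le_pow_right₀ one_le_two (by omega)
  have harg : ∀ (n : ℕ) (x : ℝ),
      (2:ℝ)^(n+1) * (x - (1 - 2/2^(n+1))) = 2^(n+1) * x + (2 - 2^(n+1)) := by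
    intro n x
    field_simp
    ring
  have hfun : ∀ n : ℕ, (fun x : ℝ => f (2^(n+1) * (x - (1 - 2/2^(n+1)))))
      = fun x : ℝ => f ((2:ℝ)^(n+1) * x + (2 - 2^(n+1))) := by
    intro n; funext x; rw [harg n x]
  have key_pre : ∀ n : ℕ,
      (fun x : ℝ => (2:ℝ)^(n+1) * x + (2 - 2^(n+1))) ⁻¹' (Set.Ico (0:ℝ) 1)
        = Set.Ico (1 - 2/2^(n+1) : ℝ) (1 - 1/2^(n+1)) := by
    intro n
    ext x
    simp only [Set.mem_preimage, Set.mem_Ico]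
    have h1 : (1 : ℝ) - 2/2^(n+1) = ((2:ℝ)^(n+1) - 2)/2^(n+1) := by field_simp
    have h2 : (1 : ℝ) - 1/2^(n+1) = ((2:ℝ)^(n+1) - 1)/2^(n+1) := by field_simp
    rw [h1, h2, div_le_iff₀ (hc n), lt_div_iff₀ (hc n)]
    have := mul_comm ((2:ℝ)^(n+1)) x
    constructor <;> rintro ⟨u, v⟩ <;> constructor <;> linarith
  have hIccIco : volume.restrict (Set.Icc (0:ℝ) 1) = volume.restrict (Set.Ico (0:ℝ) 1) :=
    Measure.restrict_congr_set Ico_ae_eq_Icc.symm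
  have hsub : ∀ n : ℕ,
      Set.Ico (1 - 2/2^(n+1) : ℝ) (1 - 1/2^(n+1)) ⊆ Set.Icc (0:ℝ) 1 := by
    intro n x hx
    obtain ⟨h1, h2⟩ := hx
    have h3 : 2/(2:ℝ)^(n+1) ≤ 1 := (div_le_one (hc n)).2 (hc2 n)
    have h4 : 0 < 1/(2:ℝ)^(n+1) := by positivity
    exact ⟨by linarith, by linarith⟩
  have hdisjle : ∀ m n : ℕ, m < n → (1:ℝ) - 1/2^(m+1) ≤ 1 - 2/2^(n+1) := by
    intro m n hmn
    have h1 : (2:ℝ) * 2^(m+1) ≤ 1 * 2^(n+1) := by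
      rw [one_mul]
      calc (2:ℝ) * 2^(m+1) = 2^(m+2) := by ring
      _ ≤ 2^(n+1) := pow_le_pow_right₀ one_le_two (by omega)
    have := (div_le_div_iff₀ (hc n) (hc m)).2 h1
    linarith
  have hdisj : ∀ m n : ℕ, m ≠ n → ∀ x : ℝ,
      x ∈ Set.Ico (1 - 2/2^(n+1) : ℝ) (1 - 1/2^(n+1)) →
      x ∉ Set.Ico (1 - 2/2^(m+1) : ℝ) (1 - 1/2^(m+1)) := by
    intro m n hmn x hxn hxm
    obtain ⟨hn1, hn2⟩ := hxn
    obtain ⟨hm1, hm2⟩ := hxm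
    rcases lt_or_gt_of_ne hmn with h | h
    · have := hdisjle m n h; linarith
    · have := hdisjle n m h; linarith
  -- MemLp transfer
  have hmem : ∀ (n : ℕ) (r : ENNReal),
      MemLp (fun x => f (2^(n+1) * (x - (1 - 2/2^(n+1))))) r
          (volume.restrict (Set.Ico (1 - 2/2^(n+1) : ℝ) (1 - 1/2^(n+1)))) ↔
        MemLp f r (volume.restrict (Set.Icc (0:ℝ) 1)) := by
    intro n r
    rw [hIccIco, ← key_pre n, hfun n]
    exact memℒp_comp_affine hf ((2:ℝ)^(n+1)) (2 - 2^(n+1)) (ne_of_gt (hc n))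
      measurableSet_Ico r
  -- a.e. zero transfer
  have hae : ∀ n : ℕ,
      (fun x => f (2^(n+1) * (x - (1 - 2/2^(n+1))))) =ᵐ[volume.restrict
          (Set.Ico (1 - 2/2^(n+1) : ℝ) (1 - 1/2^(n+1)))] (fun _ => (0:ℝ)) →
      f =ᵐ[volume.restrict (Set.Icc (0:ℝ) 1)] (fun _ => (0:ℝ)) := by
    intro n h
    rw [hIccIco]
    rw [hfun n, ← key_pre n] at h
    exact ae_zero_comp_affine hf _ _ (ne_of_gt (hc n)) measurableSet_Ico h
  -- MemLp of each fn
  have hfn_mem : ∀ n : ℕ, MemLp (fn n) (ENNReal.ofReal p)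
      (volume.restrict (Set.Icc (0:ℝ) 1)) := by
    intro n
    have hind : fn n = Set.indicator (Set.Ico (1 - 2/2^(n+1) : ℝ) (1 - 1/2^(n+1)))
        (fun x => f (2^(n+1) * (x - (1 - 2/2^(n+1))))) := by
      funext x
      rw [hfn n x, Set.indicator_apply]
    rw [hind, memLp_indicator_iff_restrict measurableSet_Ico,
      Measure.restrict_restrict measurableSet_Ico,
      Set.inter_eq_self_of_subset_left (hsub n)]
    exact (hmem n _).2 hfp
  -- the sum equals a single term on I_n
  have hS : ∀ (α : ℕ →₀ ℝ) (n : ℕ), n ∈ α.support → ∀ x : ℝ,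
      x ∈ Set.Ico (1 - 2/2^(n+1) : ℝ) (1 - 1/2^(n+1)) →
      (∑ m ∈ α.support, α m * fn m x) = α n * f (2^(n+1) * (x - (1 - 2/2^(n+1)))) := by
    intro α n hn x hx
    rw [Finset.sum_eq_single_of_mem n hn]
    · rw [hfn n x, if_pos hx]
    · intro m _ hm
      rw [hfn m x, if_neg (hdisj m n hm x hx), mul_zero]
  constructor
  · -- linear independence
    intro α h
    ext n
    by_contra hn0
    have hn : n ∈ α.support := Finsupp.mem_support_iff.2 hn0
    have h1 : (fun x => ∑ m ∈ α.support, α m * fn m x) =ᵐ[volume.restrict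
        (Set.Ico (1 - 2/2^(n+1) : ℝ) (1 - 1/2^(n+1)))] (fun _ => (0:ℝ)) :=
      h.filter_mono (ae_mono (Measure.restrict_mono (hsub n) le_rfl))
    have h2 : (fun x => α n * f (2^(n+1) * (x - (1 - 2/2^(n+1))))) =ᵐ[volume.restrict
        (Set.Ico (1 - 2/2^(n+1) : ℝ) (1 - 1/2^(n+1)))] (fun _ => (0:ℝ)) := by
      have heq : ∀ᵐ x ∂(volume.restrict (Set.Ico (1 - 2/2^(n+1) : ℝ) (1 - 1/2^(n+1)))),
          (∑ m ∈ α.support, α m * fn m x) = α n * f (2^(n+1) * (x - (1 - 2/2^(n+1)))) :=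
        (ae_restrict_iff' measurableSet_Ico).2 (ae_of_all _ (hS α n hn))
      filter_upwards [h1, heq] with x hx1 hx2
      rw [← hx2]; exact hx1
    have h3 : (fun x => f (2^(n+1) * (x - (1 - 2/2^(n+1))))) =ᵐ[volume.restrict
        (Set.Ico (1 - 2/2^(n+1) : ℝ) (1 - 1/2^(n+1)))] (fun _ => (0:ℝ)) := by
      filter_upwards [h2] with x hx
      rcases mul_eq_zero.1 hx with h | h
      · exact absurd h hn0
      · exact h
    have h4 := hae n h3
    have h5 : MemLp f (ENNReal.ofReal (p+1)) (volume.restrict (Set.Icc (0:ℝ) 1)) :=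
      (MemLp.zero').ae_eq h4.symm
    exact hfq (p+1) (by linarith) h5
  · -- combinations
    intro α hα
    constructor
    · exact memLp_finset_sum α.support (fun n _ => (hfn_mem n).const_mul (α n))
    · intro q hq hmemq
      obtain ⟨n, hn⟩ := Finsupp.support_nonempty_iff.2 hα
      have hn0 : α n ≠ 0 := Finsupp.mem_support_iff.1 hn
      have h1 : MemLp (fun x => ∑ m ∈ α.support, α m * fn m x) (ENNReal.ofReal q)
          (volume.restrict (Set.Ico (1 - 2/2^(n+1) : ℝ) (1 - 1/2^(n+1)))) :=
        hmemq.mono_measure (Measure.restrict_mono (hsub n) le_rfl)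
      have heq : (fun x => ∑ m ∈ α.support, α m * fn m x) =ᵐ[volume.restrict
          (Set.Ico (1 - 2/2^(n+1) : ℝ) (1 - 1/2^(n+1)))]
          (fun x => α n * f (2^(n+1) * (x - (1 - 2/2^(n+1))))) :=
        (ae_restrict_iff' measurableSet_Ico).2 (ae_of_all _ (hS α n hn))
      have h2 : MemLp (fun x => α n * f (2^(n+1) * (x - (1 - 2/2^(n+1))))) (ENNReal.ofReal q)
          (volume.restrict (Set.Ico (1 - 2/2^(n+1) : ℝ) (1 - 1/2^(n+1)))) :=
        h1.ae_eq heq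
      have h3 : MemLp (fun x => f (2^(n+1) * (x - (1 - 2/2^(n+1))))) (ENNReal.ofReal q)
          (volume.restrict (Set.Ico (1 - 2/2^(n+1) : ℝ) (1 - 1/2^(n+1)))) := by
        have := h2.const_mul (α n)⁻¹
        have heq2 : (fun x => (α n)⁻¹ * (α n * f (2^(n+1) * (x - (1 - 2/2^(n+1))))))
            = fun x => f (2^(n+1) * (x - (1 - 2/2^(n+1)))) := by
          funext x
          rw [← mul_assoc, inv_mul_cancel₀ hn0, one_mul]
        rwa [heq2] at this
      exact hfq q hq ((hmem n _).1 h3)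
end
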